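/- (Anchor Construction.) Let N ≥ 2, D ≥ 1, and K₁ = N(N−1)(D−1)/2 + 1. Let w_1,…,w_{K₁} ∈ ℝ^D be vectors such that every subset of D of them is linearly independent. Then for every matrix X ∈ ℝ^{N×D} there exists j ∈ {1,…,K₁} such that the vector X w_j ∈ ℝ^N (whose n-th entry is the inner product ⟨w_j, x^{(n)}⟩) is an anchor of X. -/

import Mathlib

private noncomputable def phiMap {D : ℕ} (v : Fin D → ℝ) : (Fin D → ℝ) →ₗ[ℝ] ℝ where
  toFun u := ∑ d, u d * v d
  map_add' a b := by simp [add_mul, Finset.sum_add_distrib]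
  map_smul' c a := by simp [Finset.mul_sum, mul_assoc]

private lemma hyperplane_card {D K : ℕ} (hD : 1 ≤ D) (w : Fin K → Fin D → ℝ)
    (hw : ∀ s : Finset (Fin K), s.card = D → LinearIndependent ℝ (fun j : s => w j))
    (v : Fin D → ℝ) (hv : v ≠ 0) :
    (Finset.univ.filter fun j => ∑ d, w j d * v d = 0).card ≤ D - 1 := by
  by_contra h
  push_neg at h
  have hDle : D ≤ (Finset.univ.filter fun j => ∑ d, w j d * v d = 0).card := by omega
  obtain ⟨s, hs_sub, hs_card⟩ := Finset.exists_subset_card_eq hDle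
  have li := hw s hs_card
  set φ := phiMap v with hφ
  have hmem : ∀ j ∈ s, w j ∈ LinearMap.ker φ := by
    intro j hj
    have := hs_sub hj
    simp only [Finset.mem_filter] at this
    rw [LinearMap.mem_ker]; exact this.2
  have lig : LinearIndependent ℝ (fun j : s => (⟨w j, hmem j j.2⟩ : LinearMap.ker φ)) := by
    apply LinearIndependent.of_comp (LinearMap.ker φ).subtype
    exact li
  have hsurj : Function.Surjective φ := by
    obtain ⟨d, hd⟩ := Function.ne_iff.mp hv
    simp only [Pi.zero_apply] at hd
    intro c
    refine ⟨(c / v d) • (Pi.single d 1 : Fin D → ℝ), ?_⟩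
    have : ∑ e, (Pi.single d (1:ℝ) : Fin D → ℝ) e * v e = v d := by
      rw [Finset.sum_eq_single d] <;> simp +contextual [Pi.single_apply]
    show ∑ e, ((c / v d) • (Pi.single d 1 : Fin D → ℝ)) e * v e = c
    simp only [Pi.smul_apply, smul_eq_mul]
    rw [show ∀ f : Fin D → ℝ, (∑ e, (c / v d) * f e * v e) = (c / v d) * ∑ e, f e * v e from
      fun f => by rw [Finset.mul_sum]; exact Finset.sum_congr rfl fun e _ => by ring]
    rw [this]
    field_simp
  have hrange : LinearMap.range φ = ⊤ := LinearMap.range_eq_top.mpr hsurj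
  have hrank := LinearMap.finrank_range_add_finrank_ker φ
  rw [hrange] at hrank
  simp [Module.finrank_self, Module.finrank_fin_fun] at hrank
  have hcard := lig.fintype_card_le_finrank
  rw [Fintype.card_coe, hs_card] at hcard
  have : Module.finrank ℝ (LinearMap.ker φ) = D - 1 := by omega
  omega

private lemma card_lt_pairs {N : ℕ} (P : Finset (Fin N × Fin N)) (hP : ∀ p ∈ P, p.1 < p.2) :
    P.card ≤ N * (N - 1) / 2 := by
  have hswap : (P.image Prod.swap).card = P.card :=
    Finset.card_image_of_injective _ Prod.swap_injective
  have hdisj : Disjoint P (P.image Prod.swap) := by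
    rw [Finset.disjoint_left]
    intro p hp hps
    obtain ⟨q, hq, hqe⟩ := Finset.mem_image.mp hps
    have h1 := hP p hp
    have h2 := hP q hq
    rw [← hqe] at h1
    simp [Prod.swap] at h1
    exact absurd (h1.trans h2) (lt_irrefl _)
  have hsub : P ∪ P.image Prod.swap ⊆ Finset.univ.offDiag := by
    intro p hp
    rcases Finset.mem_union.mp hp with h | h
    · exact Finset.mem_offDiag.mpr ⟨Finset.mem_univ _, Finset.mem_univ _, ne_of_lt (hP p h)⟩
    · obtain ⟨q, hq, hqe⟩ := Finset.mem_image.mp h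
      refine Finset.mem_offDiag.mpr ⟨Finset.mem_univ _, Finset.mem_univ _, ?_⟩
      rw [← hqe]
      exact ne_of_gt (hP q hq)
  have hcard := Finset.card_le_card hsub
  rw [Finset.card_union_of_disjoint hdisj, hswap] at hcard
  have hoff : (Finset.univ.offDiag : Finset (Fin N × Fin N)).card = N * N - N := by
    rw [Finset.offDiag_card]
    simp
  rw [hoff] at hcard
  have hmul : N * (N - 1) = N * N - N := by
    cases N with
    | zero => simp
    | succ n => simp [Nat.succ_sub_one, Nat.mul_succ]
  rw [Nat.le_div_iff_mul_le (by norm_num : 0 < 2)]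
  omega

theorem anchor_construction (N D : ℕ) (hN : 2 ≤ N) (hD : 1 ≤ D)
    (w : Fin (N * (N - 1) * (D - 1) / 2 + 1) → Fin D → ℝ)
    (hw : ∀ s : Finset (Fin (N * (N - 1) * (D - 1) / 2 + 1)), s.card = D →
      LinearIndependent ℝ (fun j : s => w j)) :
    ∀ X : Fin N → Fin D → ℝ, ∃ j : Fin (N * (N - 1) * (D - 1) / 2 + 1),
      ∀ n m : Fin N, X n ≠ X m → (∑ d, w j d * X n d) ≠ (∑ d, w j d * X m d) := by
  intro X
  have hK : Fintype.card (Fin (N * (N - 1) * (D - 1) / 2 + 1)) = N * (N - 1) * (D - 1) / 2 + 1 :=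
    Fintype.card_fin _
  set pairs : Finset (Fin N × Fin N) :=
    Finset.univ.filter (fun p => p.1 < p.2 ∧ X p.1 ≠ X p.2) with hpairs
  set bad : Finset (Fin (N * (N - 1) * (D - 1) / 2 + 1)) :=
    pairs.biUnion (fun p => Finset.univ.filter
      (fun j => ∑ d, w j d * (X p.1 d - X p.2 d) = 0)) with hbad
  have hbadcard : bad.card < N * (N - 1) * (D - 1) / 2 + 1 := by
    have h1 : bad.card ≤ ∑ p ∈ pairs, (Finset.univ.filter
        (fun j => ∑ d, w j d * (X p.1 d - X p.2 d) = 0)).card := Finset.card_biUnion_le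
    have h2 : ∀ p ∈ pairs, (Finset.univ.filter
        (fun j => ∑ d, w j d * (X p.1 d - X p.2 d) = 0)).card ≤ D - 1 := by
      intro p hp
      simp only [hpairs, Finset.mem_filter] at hp
      apply hyperplane_card hD w hw
      intro hzero
      apply hp.2.2
      funext d
      have := congrFun hzero d
      simpa [sub_eq_zero] using this
    have h3 : bad.card ≤ pairs.card * (D - 1) := by
      calc bad.card ≤ _ := h1
        _ ≤ ∑ _p ∈ pairs, (D - 1) := Finset.sum_le_sum h2
        _ = pairs.card * (D - 1) := by rw [Finset.sum_const, smul_eq_mul]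
    have h4 : pairs.card ≤ N * (N - 1) / 2 := by
      apply card_lt_pairs
      intro p hp
      simp only [hpairs, Finset.mem_filter] at hp
      exact hp.2.1
    have h5 : N * (N - 1) / 2 * (D - 1) = N * (N - 1) * (D - 1) / 2 := by
      obtain ⟨b, hb⟩ : 2 ∣ N * (N - 1) := by
        rcases Nat.even_or_odd N with h | h
        · exact Dvd.dvd.mul_right h.two_dvd _
        · apply Dvd.dvd.mul_left
          rcases h with ⟨k, hk⟩
          exact ⟨k, by omega⟩
      rw [hb]
      rw [Nat.mul_div_cancel_left _ (by norm_num : 0 < 2)]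
      rw [Nat.mul_assoc, Nat.mul_div_cancel_left _ (by norm_num : 0 < 2)]
    have : bad.card ≤ N * (N - 1) * (D - 1) / 2 := by
      calc bad.card ≤ pairs.card * (D - 1) := h3
        _ ≤ N * (N - 1) / 2 * (D - 1) := Nat.mul_le_mul_right _ h4
        _ = N * (N - 1) * (D - 1) / 2 := h5
    omega
  have hexists : ∃ j, j ∉ bad := by
    by_contra hall
    push_neg at hall
    have : (Finset.univ : Finset (Fin (N * (N - 1) * (D - 1) / 2 + 1))).card ≤ bad.card :=
      Finset.card_le_card (fun j _ => hall j)
    simp [Fintype.card_fin] at this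
    omega
  obtain ⟨j, hj⟩ := hexists
  refine ⟨j, ?_⟩
  intro n m hnm heq
  have key : ∀ a b : Fin N, a < b → X a ≠ X b →
      (∑ d, w j d * X a d) ≠ (∑ d, w j d * X b d) := by
    intro a b hab hXab heq'
    apply hj
    rw [hbad, Finset.mem_biUnion]
    refine ⟨(a, b), ?_, ?_⟩
    · simp [hpairs, hab, hXab]
    · simp only [Finset.mem_filter, Finset.mem_univ, true_and]
      have : ∑ d, w j d * (X a d - X b d) =
          (∑ d, w j d * X a d) - (∑ d, w j d * X b d) := by
        rw [← Finset.sum_sub_distrib]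
        exact Finset.sum_congr rfl fun d _ => by ring
      rw [this, heq', sub_self]
  rcases lt_trichotomy n m with h | h | h
  · exact key n m h hnm heq
  · exact hnm (by rw [h])
  · exact key m n h (Ne.symm hnm) heq.symm
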